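/- Suppose a nonnegative sequence satisfies ψᵗ ≤ (1 − ρ)·max_{i}ψ^{t − dᵢᵗ} + C for all t, where 0 ≤ ρ < 1, C ≥ 0, delays satisfy 0 ≤ dᵢᵗ ≤ M, and ψ⁰ is given. Then for t ∈ [Mk, M(k+1)), ψᵗ ≤ (1 − ρ)^k ψ⁰ + C/ρ (assuming ρ > 0). -/
import Mathlib


/-- Abstract epoch contraction for asynchronous SGD: a nonnegative sequence with
`ψᵗ ≤ (1 − ρ)·maxᵢ ψ^{t − dᵢᵗ} + C` for all `t ≥ 1`, delays `0 ≤ dᵢᵗ ≤ M` with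
`dᵢᵗ ≤ t`, and `0 < ρ < 1`, `C ≥ 0`, satisfies
`ψᵗ ≤ (1 − ρ)^k ψ⁰ + C/ρ` for all `t ∈ [Mk, M(k+1))`. -/
theorem stmt19 {n : ℕ} (M : ℕ) (ρ C : ℝ) (hρ0 : 0 < ρ) (hρ1 : ρ < 1) (hC : 0 ≤ C)
    (ψ : ℕ → ℝ) (hψ : ∀ t, 0 ≤ ψ t)
    (dly : Fin (n + 1) → ℕ → ℕ)
    (hd : ∀ i t, dly i t ≤ M) (hdt : ∀ i t, dly i t ≤ t)
    (hrec : ∀ t, 1 ≤ t →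
      ψ t ≤ (1 - ρ) * (Finset.univ.sup' Finset.univ_nonempty
        (fun i : Fin (n + 1) => ψ (t - dly i t))) + C) :
    ∀ k t, M * k ≤ t → t < M * (k + 1) → ψ t ≤ (1 - ρ) ^ k * ψ 0 + C / ρ := by
  have h1ρ : (0:ℝ) ≤ 1 - ρ := by linarith
  have hCρ : 0 ≤ C / ρ := div_nonneg hC hρ0.le
  have hkey : ρ * (C / ρ) = C := mul_div_cancel₀ C hρ0.ne'
  suffices H : ∀ t k, M * k ≤ t → t < M * (k + 1) → ψ t ≤ (1 - ρ) ^ k * ψ 0 + C / ρ by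
    intro k t h1 h2; exact H t k h1 h2
  intro t
  induction t using Nat.strong_induction_on with
  | _ t ih =>
    intro k h1 h2
    have hMpos : 1 ≤ M := by
      rcases Nat.eq_zero_or_pos M with h | h
      · simp [h] at h2
      · exact h
    have hpow : (0:ℝ) ≤ (1 - ρ) ^ k * ψ 0 := mul_nonneg (pow_nonneg h1ρ k) (hψ 0)
    rcases Nat.eq_zero_or_pos t with rfl | ht
    · have hk : k = 0 := by
        rcases Nat.le_zero.mp h1 with h
        rcases Nat.mul_eq_zero.mp h with h | h
        · omega
        · exact h
      subst hk
      simp only [pow_zero, one_mul]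
      linarith
    -- t ≥ 1
    obtain ⟨i, _, hi⟩ := Finset.exists_mem_eq_sup' (Finset.univ_nonempty)
      (fun i : Fin (n + 1) => ψ (t - dly i t))
    have hrec' : ψ t ≤ (1 - ρ) * ψ (t - dly i t) + C := by
      have := hrec t ht
      rw [hi] at this
      exact this
    have hdM : dly i t ≤ M := hd i t
    rcases eq_or_lt_of_le (Nat.sub_le t (dly i t)) with hst | hst
    · -- t - dly i t = t : then ρ ψ t ≤ C
      rw [hst] at hrec'
      have : ψ t ≤ C / ρ := by
        rw [le_div_iff₀ hρ0]
        nlinarith [hψ t]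
      linarith
    · -- strictly earlier
      rcases Nat.eq_zero_or_pos k with rfl | hk
      · -- k = 0
        have hb : ψ (t - dly i t) ≤ (1 - ρ) ^ 0 * ψ 0 + C / ρ :=
          ih _ hst 0 (Nat.zero_le _) (by omega)
        simp only [pow_zero, one_mul] at hb ⊢
        nlinarith [hψ 0]
      · -- k ≥ 1
        obtain ⟨k', rfl⟩ : ∃ k', k = k' + 1 := ⟨k - 1, by omega⟩
        have e1 : M * (k' + 1) = M * k' + M := by ring
        have e2 : M * (k' + 1 + 1) = M * k' + M + M := by ring
        have hb : ψ (t - dly i t) ≤ (1 - ρ) ^ k' * ψ 0 + C / ρ := by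
          rcases lt_or_ge (t - dly i t) (M * (k' + 1)) with hcase | hcase
          · exact ih _ hst k' (by omega) hcase
          · have hb' := ih _ hst (k' + 1) hcase (by omega)
            have : (1 - ρ) ^ (k' + 1) * ψ 0 ≤ (1 - ρ) ^ k' * ψ 0 := by
              apply mul_le_mul_of_nonneg_right _ (hψ 0)
              exact pow_le_pow_of_le_one h1ρ (by linarith) (Nat.le_succ k')
            linarith
        have hmul : (1 - ρ) * ψ (t - dly i t) ≤ (1 - ρ) * ((1 - ρ) ^ k' * ψ 0 + C / ρ) :=
          mul_le_mul_of_nonneg_left hb h1ρ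
        have heq : (1 - ρ) * ((1 - ρ) ^ k' * ψ 0 + C / ρ) + C
            = (1 - ρ) ^ (k' + 1) * ψ 0 + C / ρ := by
          have hp : (1 - ρ) ^ (k' + 1) = (1 - ρ) * (1 - ρ) ^ k' := by
            rw [pow_succ]; ring
          rw [hp]; nlinarith [hkey]
        linarith
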